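/- Let N and k be real numbers with N ≠ 0, and let A, B, C be real numbers. Then the triple x = [(N²−k²)A − 2kB + C]/N², y = [(kN+k²)A + (N+2k)B − C]/(2N²), z = [(k²−kN)A + (2k−N)B − C]/(2N²) is the unique solution of the linear system x + y + z = A, −k·x + (N−k)·y − (N+k)·z = B, −k²·x − (N−k)²·y − (N+k)²·z = C. -/
import Mathlib


/-- The 3×3 linear system for the cosine coefficients of the `p = 2` Hermite
trigonometric polynomial on the grid `Δ_N^{(0)}` has the indicated unique
solution. -/
theorem cosine_system3_unique_solution (N k A B C : ℝ) (hN : N ≠ 0) :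
    ∀ x y z : ℝ,
      (x + y + z = A ∧
       -k * x + (N - k) * y - (N + k) * z = B ∧
       -k ^ 2 * x - (N - k) ^ 2 * y - (N + k) ^ 2 * z = C) ↔
      (x = ((N ^ 2 - k ^ 2) * A - 2 * k * B + C) / N ^ 2 ∧
       y = ((k * N + k ^ 2) * A + (N + 2 * k) * B - C) / (2 * N ^ 2) ∧
       z = ((k ^ 2 - k * N) * A + (2 * k - N) * B - C) / (2 * N ^ 2)) := by
  intro x y z
  have hN2 : (N : ℝ) ^ 2 ≠ 0 := pow_ne_zero 2 hN
  have h2N2 : (2 : ℝ) * N ^ 2 ≠ 0 := by positivity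
  constructor
  · rintro ⟨h1, h2, h3⟩
    refine ⟨?_, ?_, ?_⟩
    · field_simp
      linear_combination (N ^ 2 - k ^ 2) * h1 - 2 * k * h2 + h3
    · field_simp
      linear_combination (k * N + k ^ 2) * h1 + (N + 2 * k) * h2 - h3
    · field_simp
      linear_combination (k ^ 2 - k * N) * h1 + (2 * k - N) * h2 - h3
  · rintro ⟨hx, hy, hz⟩
    subst hx hy hz
    refine ⟨?_, ?_, ?_⟩ <;> field_simp <;> ring
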